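/- If V is a Vassiliev invariant of degree ≤ n (its extension to singular knots vanishes on all knots with n+1 double points), then the function W on singular knots with exactly n double points given by the extension of V depends only on the chord diagram of the singular knot (it is unchanged under crossing changes of the diagram). -/
import Mathlib


/-- An abstract theory of singular knots: a type of singular knots with `n`
double points for each `n` (knots for `n = 0`), together with the positive and
negative resolutions of a chosen double point. -/
structure SingularKnotTheory where
  Sing : ℕ → Type
  resPos : ∀ {n}, Sing (n + 1) → Sing n
  resNeg : ∀ {n}, Sing (n + 1) → Sing n

/-- The extension of a knot invariant `V` to singular knots by the Vassiliev
skein relation `V(double point) = V(positive resolution) - V(negative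
resolution)`. -/
def SingularKnotTheory.ext (T : SingularKnotTheory) (V : T.Sing 0 → ℚ) :
    ∀ n, T.Sing n → ℚ
  | 0, K => V K
  | n + 1, K => T.ext V n (T.resPos K) - T.ext V n (T.resNeg K)

/-- if `V` is a Vassiliev invariant of degree ≤ `n` (its skein
extension vanishes on all singular knots with `n+1` double points), then the
extension of `V` to singular knots with `n` double points is unchanged under a
crossing change (modelled by a singular knot `L` with `n+1` double points whose
two resolutions at the extra double point are `K` and `K'`); hence it depends
only on the chord diagram of the singular knot. -/
theorem weight_system_depends_only_on_chord_diagram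
    (T : SingularKnotTheory) (V : T.Sing 0 → ℚ) (n : ℕ)
    (hdeg : ∀ L : T.Sing (n + 1), T.ext V (n + 1) L = 0)
    (K K' : T.Sing n) (L : T.Sing (n + 1))
    (hK : T.resPos L = K) (hK' : T.resNeg L = K') :
    T.ext V n K = T.ext V n K' := by
  have h := hdeg L
  rw [SingularKnotTheory.ext, hK, hK'] at h
  linarith
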